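/- Let E be a positive operator valued measure on the Borel sets of ℝ acting on a Hilbert space H with bounded first and second moment operators E[1] = ∫ x dE(x) and E[2] = ∫ x² dE(x). Then for any unit vector ψ, the variance of the probability measure X ↦ ⟨ψ, E(X)ψ⟩ equals ⟨ψ, (E[2] − E[1]²)ψ⟩ + (⟨ψ, E[1]²ψ⟩ − ⟨ψ, E[1]ψ⟩²), and both summands are nonnegative. -/

import Mathlib

open MeasureTheory
open scoped InnerProductSpace

set_option maxHeartbeats 1000000 in
/-- For a normalized POVM `E` on the Borel sets of ℝ with bounded selfadjoint
first and second moment operators `M1 = E[1]`, `M2 = E[2]`, and any unit vector `ψ`, the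
variance of the probability measure `X ↦ ⟨ψ, E(X)ψ⟩` equals
`⟨ψ,(E[2]−E[1]²)ψ⟩ + (⟨ψ,E[1]²ψ⟩ − ⟨ψ,E[1]ψ⟩²)`, and both summands are nonnegative. -/
theorem variance_decomposition_of_povm
    {H : Type*} [NormedAddCommGroup H] [InnerProductSpace ℂ H] [CompleteSpace H]
    (E : Set ℝ → (H →L[ℂ] H))
    (hEpos : ∀ X : Set ℝ, MeasurableSet X → (E X).IsPositive)
    (hEnorm : E Set.univ = 1)
    (μ : H → Measure ℝ)
    (hμprob : ∀ ψ : H, ‖ψ‖ = 1 → IsProbabilityMeasure (μ ψ))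
    (hμE : ∀ ψ : H, ‖ψ‖ = 1 → ∀ X : Set ℝ, MeasurableSet X →
      ((μ ψ) X).toReal = (⟪ψ, E X ψ⟫_ℂ).re)
    (M1 M2 : H →L[ℂ] H)
    (hM1sa : IsSelfAdjoint M1) (hM2sa : IsSelfAdjoint M2)
    (hint1 : ∀ ψ : H, ‖ψ‖ = 1 → Integrable (fun x : ℝ => x) (μ ψ))
    (hint2 : ∀ ψ : H, ‖ψ‖ = 1 → Integrable (fun x : ℝ => x ^ 2) (μ ψ))
    (hM1 : ∀ ψ : H, ‖ψ‖ = 1 → (⟪ψ, M1 ψ⟫_ℂ).re = ∫ x, x ∂(μ ψ))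
    (hM2 : ∀ ψ : H, ‖ψ‖ = 1 → (⟪ψ, M2 ψ⟫_ℂ).re = ∫ x, x ^ 2 ∂(μ ψ))
    (ψ : H) (hψ : ‖ψ‖ = 1) :
    (∫ x, (x - ∫ y, y ∂(μ ψ)) ^ 2 ∂(μ ψ))
      = (⟪ψ, (M2 - M1 ^ 2) ψ⟫_ℂ).re
        + ((⟪ψ, (M1 ^ 2) ψ⟫_ℂ).re - (⟪ψ, M1 ψ⟫_ℂ).re ^ 2)
    ∧ 0 ≤ (⟪ψ, (M2 - M1 ^ 2) ψ⟫_ℂ).re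
    ∧ 0 ≤ (⟪ψ, (M1 ^ 2) ψ⟫_ℂ).re - (⟪ψ, M1 ψ⟫_ℂ).re ^ 2 := by
  classical
  haveI hprob : IsProbabilityMeasure (μ ψ) := hμprob ψ hψ
  have hint1ψ : Integrable (fun x : ℝ => x) (μ ψ) := hint1 ψ hψ
  have hint2ψ : Integrable (fun x : ℝ => x ^ 2) (μ ψ) := hint2 ψ hψ
  set m : ℝ := ∫ y, y ∂(μ ψ) with hm
  -- real smul is complex smul
  have creal : ∀ (r : ℝ) (x : H), r • x = (r : ℂ) • x := fun _ _ => rfl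
  -- the quadratic form of M1² is ‖M1 ψ‖²
  have hsq : (⟪ψ, (M1 ^ 2) ψ⟫_ℂ).re = ‖M1 ψ‖ ^ 2 := by
    have h1 : (M1 ^ 2) ψ = M1 (M1 ψ) := by rw [pow_two]; rfl
    rw [h1, ← ContinuousLinearMap.adjoint_inner_left,
      ContinuousLinearMap.isSelfAdjoint_iff'.mp hM1sa, inner_self_eq_norm_sq_to_K]
    norm_cast
  -- the variance integral
  have hvar : (∫ x, (x - m) ^ 2 ∂(μ ψ)) = (∫ x, x ^ 2 ∂(μ ψ)) - m ^ 2 := by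
    have hfun : (fun x : ℝ => (x - m) ^ 2) = fun x : ℝ => x ^ 2 - (2 * m) * x + m ^ 2 := by
      funext x; ring
    have i0 : Integrable (fun x : ℝ => 2 * m * x) (μ ψ) := hint1ψ.const_mul (2 * m)
    have i1 : Integrable (fun x : ℝ => x ^ 2 - 2 * m * x) (μ ψ) := hint2ψ.sub i0
    rw [hfun, integral_add i1 (integrable_const _), integral_sub hint2ψ i0,
      integral_const_mul _ _, integral_const]
    simp only [measureReal_def, measure_univ, ENNReal.toReal_one, one_smul, smul_eq_mul]
    ring
  -- the decomposition of the right-hand side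
  have hdecomp : (⟪ψ, (M2 - M1 ^ 2) ψ⟫_ℂ).re
      = (⟪ψ, M2 ψ⟫_ℂ).re - (⟪ψ, (M1 ^ 2) ψ⟫_ℂ).re := by
    rw [ContinuousLinearMap.sub_apply, inner_sub_right, Complex.sub_re]
  -- Part 3 : ⟨ψ,M1ψ⟩² ≤ ‖M1ψ‖²
  have hpart3 : (⟪ψ, M1 ψ⟫_ℂ).re ^ 2 ≤ ‖M1 ψ‖ ^ 2 := by
    have h1 : |(⟪ψ, M1 ψ⟫_ℂ).re| ≤ ‖⟪ψ, M1 ψ⟫_ℂ‖ := Complex.abs_re_le_norm _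
    have h2 : ‖⟪ψ, M1 ψ⟫_ℂ‖ ≤ ‖ψ‖ * ‖M1 ψ‖ := norm_inner_le_norm ψ (M1 ψ)
    rw [hψ, one_mul] at h2
    nlinarith [sq_abs ((⟪ψ, M1 ψ⟫_ℂ).re), norm_nonneg (⟪ψ, M1 ψ⟫_ℂ), abs_nonneg ((⟪ψ, M1 ψ⟫_ℂ).re)]
  -- The hard part : ‖M1 ψ‖² ≤ ⟨ψ, M2 ψ⟩
  have hkey : ‖M1 ψ‖ ^ 2 ≤ (⟪ψ, M2 ψ⟫_ℂ).re := by
    rcases eq_or_ne (M1 ψ) 0 with h0 | h0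
    · rw [h0, hM2 ψ hψ]
      simpa using integral_nonneg (μ := μ ψ) fun x => sq_nonneg x
    · set c : H := M1 ψ with hc
      have hcn : ‖c‖ ≠ 0 := norm_ne_zero_iff.2 h0
      set w : H := (‖c‖⁻¹ : ℝ) • c with hwdef
      have hw : ‖w‖ = 1 := by
        rw [hwdef, norm_smul, Real.norm_eq_abs, abs_of_nonneg (inv_nonneg.2 (norm_nonneg c)),
          inv_mul_cancel₀ hcn]
      have hunit : ∀ v : H, v ≠ 0 → ‖(‖v‖⁻¹ : ℝ) • v‖ = 1 := by
        intro v hv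
        rw [norm_smul, Real.norm_eq_abs, abs_of_nonneg (inv_nonneg.2 (norm_nonneg v)),
          inv_mul_cancel₀ (norm_ne_zero_iff.2 hv)]
      -- the family of positive measures attached to vectors
      set ν : H → Measure ℝ := fun v => ENNReal.ofReal (‖v‖ ^ 2) • μ ((‖v‖⁻¹ : ℝ) • v) with hν
      have hν0 : ν 0 = 0 := by rw [hν]; simp
      have hscale : ∀ (T : H →L[ℂ] H) (v : H), v ≠ 0 →
          (⟪v, T v⟫_ℂ).re = ‖v‖ ^ 2 * (⟪(‖v‖⁻¹ : ℝ) • v, T ((‖v‖⁻¹ : ℝ) • v)⟫_ℂ).re := by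
        intro T v hv
        have hr : (‖v‖ : ℝ) ≠ 0 := norm_ne_zero_iff.2 hv
        have hvv : (‖v‖ : ℝ) • ((‖v‖⁻¹ : ℝ) • v) = v := smul_inv_smul₀ hr v
        conv_lhs => rw [← hvv, creal]
        rw [inner_smul_left, _root_.map_smul, inner_smul_right, Complex.conj_ofReal]
        simp only [Complex.mul_re, Complex.ofReal_re, Complex.ofReal_im]
        ring
      haveI hfin : ∀ v : H, IsFiniteMeasure (ν v) := by
        intro v
        by_cases hv : v = 0
        · rw [hv, hν0]; infer_instance
        · haveI := hμprob _ (hunit v hv)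
          constructor
          rw [hν]
          simp only [Measure.smul_apply, smul_eq_mul]
          exact ENNReal.mul_lt_top ENNReal.ofReal_lt_top (measure_lt_top _ _)
      have hK1 : ∀ (v : H) (A : Set ℝ), MeasurableSet A →
          ((ν v) A).toReal = (⟪v, E A v⟫_ℂ).re := by
        intro v A hA
        by_cases hv : v = 0
        · rw [hv, hν0]; simp
        · haveI := hμprob _ (hunit v hv)
          rw [hν]
          simp only [Measure.smul_apply, smul_eq_mul]
          rw [ENNReal.toReal_mul, ENNReal.toReal_ofReal (sq_nonneg _),
            hμE _ (hunit v hv) A hA, ← hscale (E A) v hv]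
      have hKuniv : ∀ v : H, ((ν v) Set.univ).toReal = ‖v‖ ^ 2 := by
        intro v
        rw [hK1 v _ MeasurableSet.univ, hEnorm, ContinuousLinearMap.one_apply,
          inner_self_eq_norm_sq_to_K]
        norm_cast
      have hKint1 : ∀ v : H, Integrable (fun x : ℝ => x) (ν v) := by
        intro v
        by_cases hv : v = 0
        · rw [hv, hν0]; exact integrable_zero_measure
        · rw [hν]; exact (hint1 _ (hunit v hv)).smul_measure ENNReal.ofReal_ne_top
      have hKint2 : ∀ v : H, Integrable (fun x : ℝ => x ^ 2) (ν v) := by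
        intro v
        by_cases hv : v = 0
        · rw [hv, hν0]; exact integrable_zero_measure
        · rw [hν]; exact (hint2 _ (hunit v hv)).smul_measure ENNReal.ofReal_ne_top
      have hK5 : ∀ v : H, ∫ x, x ∂(ν v) = (⟪v, M1 v⟫_ℂ).re := by
        intro v
        by_cases hv : v = 0
        · rw [hv, hν0]; simp
        · rw [hν]
          simp only [integral_smul_measure, smul_eq_mul]
          rw [ENNReal.toReal_ofReal (sq_nonneg _), ← hM1 _ (hunit v hv), ← hscale M1 v hv]
      have hνψ : ν ψ = μ ψ := by
        rw [hν]; simp [hψ]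
      -- the polarization-type identity
      have hI1 : ∀ (y : ℝ) (A : Set ℝ), MeasurableSet A →
          ((ν (w + (y : ℂ) • ψ)) A).toReal
            = (ν w A).toReal + (y / 2) * ((ν (w + ψ) A).toReal - (ν (w - ψ) A).toReal)
              + y ^ 2 * (ν ψ A).toReal := by
        intro y A hA
        rw [hK1 (w + (y : ℂ) • ψ) _ hA, hK1 w _ hA, hK1 (w + ψ) _ hA, hK1 (w - ψ) _ hA,
          hK1 ψ _ hA]
        simp only [map_add, map_sub, _root_.map_smul, inner_add_left, inner_add_right,
          inner_sub_left, inner_sub_right, inner_smul_left, inner_smul_right,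
          Complex.conj_ofReal, Complex.add_re, Complex.sub_re, Complex.mul_re,
          Complex.ofReal_re, Complex.ofReal_im]
        ring
      -- positivity for simple functions
      have hH : ∀ s : SimpleFunc ℝ ℝ,
          0 ≤ 1 + (1 / 2) * ((∫ x, s x ∂(ν (w + ψ))) - ∫ x, s x ∂(ν (w - ψ)))
            + ∫ x, (s x) ^ 2 ∂(ν ψ) := by
        intro s
        have e1 : ∀ v : H, ((ν v) Set.univ).toReal
            = ∑ y ∈ s.range, ((ν v) (s ⁻¹' {y})).toReal := by
          intro v
          have hcover : (⋃ y ∈ s.range, s ⁻¹' {y}) = Set.univ := by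
            ext x
            simp only [Set.mem_iUnion, Set.mem_preimage, Set.mem_singleton_iff, Set.mem_univ,
              iff_true]
            exact ⟨s x, s.mem_range_self x, rfl⟩
          have hdisj : (↑s.range : Set ℝ).PairwiseDisjoint (fun y => s ⁻¹' {y}) := by
            intro a _ b _ hab
            simp only [Function.onFun, Set.disjoint_left, Set.mem_preimage,
              Set.mem_singleton_iff]
            rintro x rfl h; exact hab h
          rw [← hcover, measure_biUnion_finset hdisj (fun y _ => s.measurableSet_fiber y),
            ENNReal.toReal_sum (fun y _ => measure_ne_top _ _)]
        have e2 : ∀ v : H, ∫ x, s x ∂(ν v)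
            = ∑ y ∈ s.range, ((ν v) (s ⁻¹' {y})).toReal * y := by
          intro v
          rw [SimpleFunc.integral_eq_sum s (s.integrable_of_isFiniteMeasure)]
          simp [smul_eq_mul, measureReal_def]
        have e3 : ∫ x, (s x) ^ 2 ∂(ν ψ)
            = ∑ y ∈ s.range, ((ν ψ) (s ⁻¹' {y})).toReal * y ^ 2 := by
          have h1 : (fun x => (s x) ^ 2) = ⇑(s.map (fun y : ℝ => y ^ 2)) := by ext x; simp
          rw [h1, ← SimpleFunc.integral_eq_integral _ ((s.map _).integrable_of_isFiniteMeasure),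
            SimpleFunc.map_integral s _ (s.integrable_of_isFiniteMeasure) (by norm_num)]
          simp [smul_eq_mul, measureReal_def]
        calc (0:ℝ) ≤ ∑ y ∈ s.range, ((ν (w + (y : ℂ) • ψ)) (s ⁻¹' {y})).toReal :=
              Finset.sum_nonneg fun y _ => ENNReal.toReal_nonneg
          _ = ∑ y ∈ s.range, (((ν w) (s ⁻¹' {y})).toReal
                + ((1/2) * (((ν (w + ψ)) (s ⁻¹' {y})).toReal * y)
                  - (1/2) * (((ν (w - ψ)) (s ⁻¹' {y})).toReal * y))
                + ((ν ψ) (s ⁻¹' {y})).toReal * y ^ 2) :=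
              Finset.sum_congr rfl fun y _ => by
                rw [hI1 y _ (s.measurableSet_fiber y)]; ring
          _ = (∑ y ∈ s.range, ((ν w) (s ⁻¹' {y})).toReal)
                + ((1/2) * (∑ y ∈ s.range, ((ν (w + ψ)) (s ⁻¹' {y})).toReal * y)
                  - (1/2) * (∑ y ∈ s.range, ((ν (w - ψ)) (s ⁻¹' {y})).toReal * y))
                + ∑ y ∈ s.range, ((ν ψ) (s ⁻¹' {y})).toReal * y ^ 2 := by
              rw [Finset.sum_add_distrib, Finset.sum_add_distrib, Finset.sum_sub_distrib,
                Finset.mul_sum, Finset.mul_sum]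
          _ = 1 + (1 / 2) * ((∫ x, s x ∂(ν (w + ψ))) - ∫ x, s x ∂(ν (w - ψ)))
                + ∫ x, (s x) ^ 2 ∂(ν ψ) := by
              rw [← e1 w, ← e2 (w + ψ), ← e2 (w - ψ), ← e3, hKuniv w, hw]
              ring
      -- pass to the limit along simple approximations of the identity
      set L : ℝ := (1 / 2) * ((∫ x, x ∂(ν (w + ψ))) - ∫ x, x ∂(ν (w - ψ))) with hL
      set S : ℝ := ∫ x, x ^ 2 ∂(ν ψ) with hS
      have hLS : L ^ 2 ≤ 4 * S := by
        set sn : ℕ → SimpleFunc ℝ ℝ := fun n =>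
          SimpleFunc.approxOn (fun x : ℝ => x) measurable_id Set.univ 0 (Set.mem_univ 0) n
          with hsn
        have htend : ∀ x : ℝ, Filter.Tendsto (fun n => sn n x) Filter.atTop (nhds x) :=
          fun x => SimpleFunc.tendsto_approxOn measurable_id (Set.mem_univ 0) (by simp)
        have hbdd : ∀ (n : ℕ) (x : ℝ), ‖sn n x‖ ≤ ‖x‖ + ‖x‖ :=
          fun n x => SimpleFunc.norm_approxOn_zero_le measurable_id (Set.mem_univ 0) x n
        set Ln : ℕ → ℝ := fun n =>
          (1 / 2) * ((∫ x, sn n x ∂(ν (w + ψ))) - ∫ x, sn n x ∂(ν (w - ψ))) with hLn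
        set Sn : ℕ → ℝ := fun n => ∫ x, (sn n x) ^ 2 ∂(ν ψ) with hSn
        have hquad : ∀ n, (Ln n) ^ 2 ≤ 4 * Sn n := by
          intro n
          have hq : ∀ t : ℝ, 0 ≤ Sn n * (t * t) + Ln n * t + 1 := by
            intro t
            have h := hH (t • sn n)
            have hco : ∀ x : ℝ, (t • sn n) x = t * sn n x := fun x => by simp
            simp only [hco] at h
            rw [integral_const_mul _ _, integral_const_mul _ _] at h
            have hsq' : ∀ x : ℝ, (t * sn n x) ^ 2 = t ^ 2 * (sn n x) ^ 2 := fun x => by ring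
            simp only [hsq'] at h
            rw [integral_const_mul _ _] at h
            simp only [hLn, hSn]
            nlinarith [h]
          have hd := discrim_le_zero hq
          rw [discrim] at hd
          nlinarith [hd]
        have htL : Filter.Tendsto Ln Filter.atTop (nhds L) := by
          have hconv : ∀ v : H, Filter.Tendsto (fun n => ∫ x, sn n x ∂(ν v))
              Filter.atTop (nhds (∫ x, x ∂(ν v))) := by
            intro v
            refine tendsto_integral_of_dominated_convergence (fun x => ‖x‖ + ‖x‖)
              (fun n => (sn n).aestronglyMeasurable) ((hKint1 v).norm.add (hKint1 v).norm)
              (fun n => Filter.Eventually.of_forall fun x => hbdd n x)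
              (Filter.Eventually.of_forall fun x => htend x)
          rw [hL]
          exact ((hconv (w + ψ)).sub (hconv (w - ψ))).const_mul _
        have htS : Filter.Tendsto Sn Filter.atTop (nhds S) := by
          refine tendsto_integral_of_dominated_convergence (fun x => 4 * x ^ 2)
            (fun n => ((sn n).measurable.pow_const 2).aestronglyMeasurable)
            ((hKint2 ψ).const_mul 4) ?_ ?_
          · refine fun n => Filter.Eventually.of_forall fun x => ?_
            have hb : |sn n x| ≤ 2 * |x| := by
              simpa [Real.norm_eq_abs, two_mul] using hbdd n x
            have h2' := mul_self_le_mul_self (abs_nonneg ((sn n) x)) hb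
            rw [abs_mul_abs_self] at h2'
            rw [Real.norm_eq_abs, abs_of_nonneg (sq_nonneg _)]
            show (sn n x) ^ 2 ≤ 4 * x ^ 2
            nlinarith [sq_abs x, pow_two ((sn n) x)]
          · refine Filter.Eventually.of_forall fun x => ?_
            have h := htend x
            simpa [pow_two] using h.mul h
        have h1 : Filter.Tendsto (fun n => (Ln n) ^ 2) Filter.atTop (nhds (L ^ 2)) :=
          htL.pow 2
        have h2 : Filter.Tendsto (fun n => 4 * Sn n) Filter.atTop (nhds (4 * S)) :=
          htS.const_mul 4
        exact le_of_tendsto_of_tendsto' h1 h2 hquad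
      -- identify the limits
      have hwM1 : (⟪w, M1 ψ⟫_ℂ).re = ‖c‖ := by
        rw [← hc, hwdef, creal, inner_smul_left, Complex.conj_ofReal,
          inner_self_eq_norm_sq_to_K]
        simp [pow_two, Complex.mul_re]
        field_simp
      have hconj : (⟪ψ, M1 w⟫_ℂ).re = (⟪w, M1 ψ⟫_ℂ).re := by
        rw [← ContinuousLinearMap.adjoint_inner_left,
          ContinuousLinearMap.isSelfAdjoint_iff'.mp hM1sa, ← inner_conj_symm,
          Complex.conj_re]
      have hLval : L = 2 * ‖c‖ := by
        rw [hL, hK5, hK5]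
        have hexp : (⟪w + ψ, M1 (w + ψ)⟫_ℂ).re - (⟪w - ψ, M1 (w - ψ)⟫_ℂ).re
            = 2 * ((⟪w, M1 ψ⟫_ℂ).re + (⟪ψ, M1 w⟫_ℂ).re) := by
          simp only [map_add, map_sub, inner_add_left, inner_add_right, inner_sub_left,
            inner_sub_right, Complex.add_re, Complex.sub_re]
          ring
        rw [hexp, hconj, hwM1]
        ring
      have hSval : S = (⟪ψ, M2 ψ⟫_ℂ).re := by rw [hS, hνψ, hM2 ψ hψ]
      have hLsq : L ^ 2 = 4 * ‖c‖ ^ 2 := by rw [hLval]; ring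
      linarith [hLS, hLsq, hSval.symm.le, hSval.le]
  refine ⟨?_, ?_, ?_⟩
  · rw [hvar, hdecomp, hsq, ← hM2 ψ hψ, hM1 ψ hψ, ← hm]
    ring
  · rw [hdecomp, hsq]
    linarith [hkey]
  · rw [hsq]
    linarith [hpart3]
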